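/- Consider a parallel-link network with demand r where the system-optimal flow f is unique and all latencies are strictly increasing. Define a link e to be zero reduced cost if lₑ(fₑ) = min_{e'} l_{e'}(f_{e'}) and cₑ'(fₑ) = min_{e'} c_{e'}'(f_{e'}). Then the maximal volume of self-interested demand compatible with system optimum equals ∑_{e zero reduced cost} fₑ. -/

import Mathlib

open Filter Topology

open Filter Topology

lemma kkt_mc_min {E : Type*} [Fintype E]
    (l : E → ℝ → ℝ)
    (hldiff : ∀ e, Differentiable ℝ (l e))
    (r : ℝ)
    (f : E → ℝ) (hf0 : ∀ e, 0 ≤ f e) (hfr : ∑ e, f e = r)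
    (hfSO : ∀ h : E → ℝ, (∀ e, 0 ≤ h e) → ∑ e, h e = r →
      ∑ e, l e (f e) * f e ≤ ∑ e, l e (h e) * h e)
    (e e' : E) (he : 0 < f e) :
    l e (f e) + f e * deriv (l e) (f e)
      ≤ l e' (f e') + f e' * deriv (l e') (f e') := by
  classical
  rcases eq_or_ne e e' with rfl | hne
  · exact le_refl _
  set De : ℝ := l e (f e) + f e * deriv (l e) (f e) with hDe
  set De' : ℝ := l e' (f e') + f e' * deriv (l e') (f e') with hDe'
  set φ : ℝ → ℝ := fun ε => l e (f e - ε) * (f e - ε) + l e' (f e' + ε) * (f e' + ε) with hφ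
  have hce : HasDerivAt (fun x => l e x * x) De (f e) := by
    have := ((hldiff e (f e)).hasDerivAt.mul (hasDerivAt_id (f e)))
    refine this.congr_deriv ?_; simp only [id_eq, mul_one, hDe, hDe']; ring
  have hce' : HasDerivAt (fun x => l e' x * x) De' (f e') := by
    have := ((hldiff e' (f e')).hasDerivAt.mul (hasDerivAt_id (f e')))
    refine this.congr_deriv ?_; simp only [id_eq, mul_one, hDe, hDe']; ring
  have h1 : HasDerivAt (fun ε : ℝ => l e (f e - ε) * (f e - ε)) (-De) 0 := by
    have hin : HasDerivAt (fun ε : ℝ => f e - ε) (-1) 0 := by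
      simpa using (hasDerivAt_id (0:ℝ)).const_sub (f e)
    have h2 : HasDerivAt (fun x => l e x * x) De (f e - 0) := by simpa using hce
    have := h2.comp 0 hin
    refine this.congr_deriv ?_
    ring
  have h2 : HasDerivAt (fun ε : ℝ => l e' (f e' + ε) * (f e' + ε)) De' 0 := by
    have hin : HasDerivAt (fun ε : ℝ => f e' + ε) 1 0 := by
      simpa using (hasDerivAt_id (0:ℝ)).const_add (f e')
    have h2 : HasDerivAt (fun x => l e' x * x) De' (f e' + 0) := by simpa using hce'
    have := h2.comp 0 hin
    refine this.congr_deriv ?_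
    ring
  have hder : HasDerivAt φ (De' - De) 0 := by
    have := h1.add h2
    refine this.congr_deriv ?_; ring
  rw [hasDerivAt_iff_tendsto_slope] at hder
  have hder' : Tendsto (slope φ 0) (𝓝[>] 0) (𝓝 (De' - De)) :=
    hder.mono_left (nhdsWithin_mono 0 (fun x hx => ne_of_gt hx))
  have hnonneg : ∀ᶠ ε in 𝓝[>] (0:ℝ), 0 ≤ slope φ 0 ε := by
    filter_upwards [Ioo_mem_nhdsGT_of_mem (Set.mem_Ico.mpr ⟨le_refl 0, he⟩)] with ε hε
    obtain ⟨hε0, hεf⟩ := hε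
    set h : E → ℝ := fun a => f a + (if a = e' then ε else 0) - (if a = e then ε else 0)
      with hh
    have hh0 : ∀ a, 0 ≤ h a := by
      intro a
      by_cases ha : a = e
      · subst ha
        have hha : h a = f a - ε := by simp [hh, hne]
        rw [hha]; linarith
      · by_cases ha' : a = e'
        · subst ha'
          have hha : h a = f a + ε := by simp [hh, ha]
          rw [hha]
          have := hf0 a
          linarith
        · simp [hh, ha, ha', hf0 a]
    have hhsum : ∑ a, h a = r := by
      simp only [hh, Finset.sum_sub_distrib, Finset.sum_add_distrib,
        Finset.sum_ite_eq', Finset.mem_univ, if_true, hfr]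
      ring
    have hle := hfSO h hh0 hhsum
    have hdiff : 0 ≤ ∑ a, (l a (h a) * h a - l a (f a) * f a) := by
      rw [Finset.sum_sub_distrib]; linarith
    have hsupp : ∀ a ∈ Finset.univ, a ∉ ({e, e'} : Finset E) →
        l a (h a) * h a - l a (f a) * f a = 0 := by
      intro a _ ha
      simp only [Finset.mem_insert, Finset.mem_singleton, not_or] at ha
      simp [hh, ha.1, ha.2]
    have hsum2 : ∑ a, (l a (h a) * h a - l a (f a) * f a)
        = ∑ a ∈ ({e, e'} : Finset E), (l a (h a) * h a - l a (f a) * f a) :=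
      (Finset.sum_subset (Finset.subset_univ _) hsupp).symm
    rw [hsum2, Finset.sum_pair hne] at hdiff
    have hhe : h e = f e - ε := by simp [hh, hne]
    have hhe' : h e' = f e' + ε := by simp [hh, Ne.symm hne]
    rw [hhe, hhe'] at hdiff
    have hslope : slope φ 0 ε = (φ ε - φ 0) / ε := by
      rw [slope_def_field]; simp [div_eq_div_iff]
    rw [hslope]
    apply div_nonneg _ (le_of_lt hε0)
    have hφ0 : φ 0 = l e (f e) * f e + l e' (f e') * f e' := by simp [hφ]
    have hφε : φ ε = l e (f e - ε) * (f e - ε) + l e' (f e' + ε) * (f e' + ε) := rfl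
    rw [hφ0, hφε]
    linarith
  have : 0 ≤ De' - De := ge_of_tendsto hder' hnonneg
  linarith



/-- With a unique system-optimal flow `f` and strictly increasing latencies, the
maximal volume of self-interested demand compatible with system optimum equals
the total SO flow on zero reduced cost links (minimal latency and minimal
marginal cost at SO). -/
theorem max_selfish_volume_eq_zero_reduced_cost_flow {E : Type*} [Fintype E]
    (l : E → ℝ → ℝ)
    (hl0 : ∀ e x, 0 ≤ l e x)
    (hlstrict : ∀ e, StrictMono (l e))
    (hldiff : ∀ e, Differentiable ℝ (l e))
    (hconv : ∀ e, ConvexOn ℝ (Set.Ici 0) (fun x => l e x * x))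
    (r : ℝ) (hr : 0 < r)
    (f : E → ℝ) (hf0 : ∀ e, 0 ≤ f e) (hfr : ∑ e, f e = r)
    (hfSO : ∀ h : E → ℝ, (∀ e, 0 ≤ h e) → ∑ e, h e = r →
      ∑ e, l e (f e) * f e ≤ ∑ e, l e (h e) * h e)
    -- f is the unique system-optimal flow
    (hfuniq : ∀ g : E → ℝ, (∀ e, 0 ≤ g e) → ∑ e, g e = r →
      (∀ h : E → ℝ, (∀ e, 0 ≤ h e) → ∑ e, h e = r →
        ∑ e, l e (g e) * g e ≤ ∑ e, l e (h e) * h e) → g = f) :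
    IsGreatest
      {u : ℝ | ∃ fUE fC : E → ℝ,
        (∀ e, 0 ≤ fUE e) ∧ (∀ e, 0 ≤ fC e) ∧
        (∀ e, fUE e + fC e = f e) ∧
        (∑ e, fUE e) = u ∧
        -- self-interested flow only on minimal-latency links
        (∀ e, 0 < fUE e → ∀ e', l e (f e) ≤ l e' (f e'))}
      (∑ e ∈ Finset.univ.filter (fun e =>
          (∀ e', l e (f e) ≤ l e' (f e')) ∧
          (∀ e', l e (f e) + f e * deriv (l e) (f e)
            ≤ l e' (f e') + f e' * deriv (l e') (f e'))),
        f e) := by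
  classical
  set P : E → Prop := fun e =>
      (∀ e', l e (f e) ≤ l e' (f e')) ∧
      (∀ e', l e (f e) + f e * deriv (l e) (f e)
        ≤ l e' (f e') + f e' * deriv (l e') (f e'))
  constructor
  · -- membership
    refine ⟨fun e => if P e then f e else 0, fun e => if P e then 0 else f e, ?_, ?_, ?_, ?_, ?_⟩
    · intro e; dsimp only; split <;> simp [hf0 e]
    · intro e; dsimp only; split <;> simp [hf0 e]
    · intro e; dsimp only; split <;> simp
    · rw [Finset.sum_filter]
    · intro e hUE e'
      by_cases hP : P e
      · exact hP.1 e'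
      · simp [hP] at hUE
  · -- upper bound
    rintro u ⟨fUE, fC, hUE0, hC0, hsplit, hsum, hmin⟩
    have hUEle : ∀ e, fUE e ≤ f e := by
      intro e; have := hC0 e; have := hsplit e; linarith
    have hvanish : ∀ e, ¬ P e → fUE e = 0 := by
      intro e hP
      by_contra hne
      have hpos : 0 < fUE e := lt_of_le_of_ne (hUE0 e) (Ne.symm hne)
      have hfe : 0 < f e := lt_of_lt_of_le hpos (hUEle e)
      exact hP ⟨hmin e hpos,
        fun e' => kkt_mc_min l hldiff r f hf0 hfr hfSO e e' hfe⟩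
    rw [← hsum]
    have h1 : ∑ e, fUE e = ∑ e ∈ Finset.univ.filter P, fUE e := by
      rw [Finset.sum_filter]
      refine Finset.sum_congr rfl fun e _ => ?_
      by_cases hP : P e
      · rw [if_pos hP]
      · simp [hP, hvanish e hP]
    rw [h1]
    exact Finset.sum_le_sum fun e _ => hUEle e
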